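/- Let a ∈ K = F_{2^τ}((π)) and let b be an element of an algebraic closure of K with b² + b = a. Then D(a) = (0) if and only if b ∈ K. -/

import Mathlib

noncomputable section

/-- The finite field with `2 ^ τ` elements. -/
abbrev Fq (τ : ℕ) := GaloisField 2 τ

/-- The field of formal Laurent series `K = F_{2^τ}((π))`. -/
abbrev Kk (τ : ℕ) := LaurentSeries (Fq τ)

/-- The ring of integers `O = F_{2^τ}[[π]]`. -/
abbrev Ok (τ : ℕ) := PowerSeries (Fq τ)

/-- The Artin–Schreier defect `D(a) = ⋂_{h ∈ K} (h² + h + a)`, an intersection of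
principal fractional `O`-ideals (as `O`-submodules of `K`). -/
def ASdefect (τ : ℕ) (a : Kk τ) : Submodule (Ok τ) (Kk τ) :=
  ⨅ h : Kk τ, Submodule.span (Ok τ) {h ^ 2 + h + a}

namespace ASaux

variable {F : Type*} [Field F]

theorem antidiag_cancel [CharP F 2] (s : Finset (ℕ × ℕ)) (G : ℕ × ℕ → F)
    (hGs : ∀ p : ℕ × ℕ, G p.swap = G p)
    (hswap : ∀ p ∈ s, p.swap ∈ s)
    (hfix : ∀ p ∈ s, G p ≠ 0 → p.swap ≠ p) : ∑ p ∈ s, G p = 0 :=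
  Finset.sum_involution (fun p _ => p.swap)
    (fun p _ => by rw [hGs]; exact CharTwo.add_self_eq_zero _)
    (fun p hp => hfix p hp) (fun p hp => hswap p hp) (fun p _ => Prod.swap_swap p)

/-- In characteristic two, the coefficient of the square of a power series. -/
theorem coeff_sq [CharP F 2] (f : PowerSeries F) (k : ℕ) :
    PowerSeries.coeff (R := F) k (f ^ 2) =
      if 2 ∣ k then (PowerSeries.coeff (R := F) (k / 2) f) ^ 2 else 0 := by
  classical
  rw [sq, PowerSeries.coeff_mul]
  set G : ℕ × ℕ → F := fun p => PowerSeries.coeff (R := F) p.1 f * PowerSeries.coeff (R := F) p.2 f with hG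
  have hGsym : ∀ p : ℕ × ℕ, G p.swap = G p := fun p => by simp [hG, mul_comm]
  by_cases hk : 2 ∣ k
  · obtain ⟨m, rfl⟩ := hk
    have hmm : ((m, m) : ℕ × ℕ) ∈ Finset.HasAntidiagonal.antidiagonal (2 * m) := by
      rw [Finset.HasAntidiagonal.mem_antidiagonal]; omega
    rw [if_pos ⟨m, rfl⟩, ← Finset.add_sum_erase _ G hmm]
    have hz : ∑ p ∈ (Finset.HasAntidiagonal.antidiagonal (2 * m)).erase (m, m), G p = 0 := by
      refine antidiag_cancel _ G hGsym (fun p hp => ?_) (fun p hp hne hsw => ?_)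
      · rw [Finset.mem_erase] at hp ⊢
        have h2 := Finset.HasAntidiagonal.mem_antidiagonal.mp hp.2
        refine ⟨fun h => hp.1 ?_, by rw [Finset.HasAntidiagonal.mem_antidiagonal, Prod.fst_swap, Prod.snd_swap]; omega⟩
        have h1 := congrArg Prod.fst h
        have h2' := congrArg Prod.snd h
        simp only [Prod.fst_swap, Prod.snd_swap] at h1 h2'
        exact Prod.ext h2' h1
      · have h2 := Finset.HasAntidiagonal.mem_antidiagonal.mp (Finset.mem_of_mem_erase hp)
        have h1 := congrArg Prod.fst hsw
        simp only [Prod.fst_swap] at h1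
        exact (Finset.ne_of_mem_erase hp) (Prod.ext (by omega) (by omega))
    rw [hz, add_zero]
    have hdiv : 2 * m / 2 = m := by omega
    rw [hdiv, hG, sq]
  · rw [if_neg hk]
    refine antidiag_cancel _ G hGsym (fun p hp => ?_) (fun p hp hne hsw => ?_)
    · rw [Finset.HasAntidiagonal.mem_antidiagonal] at hp
      rw [Finset.HasAntidiagonal.mem_antidiagonal, Prod.fst_swap, Prod.snd_swap]
      omega
    · have h2 := Finset.HasAntidiagonal.mem_antidiagonal.mp hp
      have h1 := congrArg Prod.fst hsw
      simp only [Prod.fst_swap] at h1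
      exact hk ⟨p.1, by omega⟩

/-- The recursively defined coefficients of an Artin–Schreier root of a power
series with zero constant coefficient. -/
def gammaFun (c : ℕ → F) : ℕ → F
  | 0 => 0
  | (k + 1) =>
      c (k + 1) + (if 2 ∣ (k + 1) then (gammaFun c ((k + 1) / 2)) ^ 2 else 0)
  decreasing_by exact Nat.div_lt_self (Nat.succ_pos k) one_lt_two

theorem gammaFun_zero (c : ℕ → F) : gammaFun c 0 = 0 := by rw [gammaFun]

theorem gammaFun_succ (c : ℕ → F) (k : ℕ) :
    gammaFun c (k + 1) =
      c (k + 1) + (if 2 ∣ (k + 1) then (gammaFun c ((k + 1) / 2)) ^ 2 else 0) := by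
  rw [gammaFun]

/-- Every power series with zero constant coefficient has an Artin–Schreier root. -/
theorem exists_AS_root [CharP F 2] (c : PowerSeries F)
    (hc : PowerSeries.coeff (R := F) 0 c = 0) :
    ∃ g : PowerSeries F, g ^ 2 + g = c := by
  classical
  set γ : ℕ → F := gammaFun (fun n => PowerSeries.coeff (R := F) n c) with hγ
  refine ⟨PowerSeries.mk γ, ?_⟩
  ext k
  rw [map_add, coeff_sq]
  simp only [PowerSeries.coeff_mk]
  rcases k with _ | k
  · have h0 : γ 0 = 0 := gammaFun_zero _
    simp [h0, hc]
  · by_cases hdvd : 2 ∣ (k + 1)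
    · have hrec : γ (k + 1) =
          PowerSeries.coeff (R := F) (k + 1) c + (γ ((k + 1) / 2)) ^ 2 := by
        rw [hγ, gammaFun_succ, if_pos hdvd]
      rw [if_pos hdvd, hrec]
      set x := (γ ((k + 1) / 2)) ^ 2
      rw [← add_assoc, add_comm x, add_assoc, CharTwo.add_self_eq_zero, add_zero]
    · have hrec : γ (k + 1) = PowerSeries.coeff (R := F) (k + 1) c := by
        rw [hγ, gammaFun_succ, if_neg hdvd, add_zero]
      rw [if_neg hdvd, hrec, zero_add]

/-- A Laurent series whose negative coefficients vanish comes from a power series,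
with the same coefficients. -/
theorem exists_powerSeries (x : LaurentSeries F) (hx : ∀ n : ℤ, n < 0 → x.coeff n = 0) :
    ∃ r : PowerSeries F, (r : LaurentSeries F) = x ∧
      ∀ n : ℕ, PowerSeries.coeff (R := F) n r = x.coeff n := by
  classical
  refine ⟨PowerSeries.mk fun n => x.coeff n, ?_, fun n => by rw [PowerSeries.coeff_mk]⟩
  ext i
  rw [PowerSeries.coeff_coe]
  split_ifs with h
  · exact (hx i h).symm
  · rw [PowerSeries.coeff_mk]
    congr 1
    omega

/-- If `c` is nonzero of nonpositive order, then `1` lies in the `O`-span of `c`. -/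
theorem one_mem_span (c : LaurentSeries F) (hc : c ≠ 0) (hord : c.order ≤ 0) :
    (1 : LaurentSeries F) ∈ Submodule.span (PowerSeries F) {c} := by
  classical
  have hu : c⁻¹ * c = 1 := inv_mul_cancel₀ hc
  have hu0 : c⁻¹ ≠ 0 := inv_ne_zero hc
  have horder : (c⁻¹ * c).order = c⁻¹.order + c.order := HahnSeries.order_mul hu0 hc
  rw [hu, HahnSeries.order_one] at horder
  have hinv : (0 : ℤ) ≤ c⁻¹.order := by omega
  obtain ⟨r, hr, -⟩ := exists_powerSeries c⁻¹ (fun n hn =>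
    HahnSeries.coeff_eq_zero_of_lt_order (lt_of_lt_of_le hn hinv))
  rw [Submodule.mem_span_singleton]
  refine ⟨r, ?_⟩
  rw [Algebra.smul_def, LaurentSeries.coe_algebraMap, hr, hu]

end ASaux

/-- for `b` in an algebraic closure of `K` with `b² + b = a`,
`D(a) = (0)` if and only if `b ∈ K`. -/
theorem ASdefect_eq_bot_iff (τ : ℕ) (hτ : 0 < τ) (a : Kk τ)
    (b : AlgebraicClosure (Kk τ))
    (hb : b ^ 2 + b = algebraMap (Kk τ) (AlgebraicClosure (Kk τ)) a) :
    ASdefect τ a = ⊥ ↔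
      b ∈ (algebraMap (Kk τ) (AlgebraicClosure (Kk τ))).range := by
  classical
  haveI : CharP (Kk τ) 2 :=
    charP_of_injective_ringHom (HahnSeries.C : Fq τ →+* Kk τ).injective 2
  haveI : CharP (AlgebraicClosure (Kk τ)) 2 :=
    charP_of_injective_ringHom
      (algebraMap (Kk τ) (AlgebraicClosure (Kk τ))).injective 2
  set ι := algebraMap (Kk τ) (AlgebraicClosure (Kk τ)) with hι
  have h2K : (2 : Kk τ) = 0 := CharTwo.two_eq_zero
  have h2A : (2 : AlgebraicClosure (Kk τ)) = 0 := CharTwo.two_eq_zero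
  -- If `a = h² + h` for some `h ∈ K`, then `b ∈ K`.
  have caseA : ∀ h : Kk τ, h ^ 2 + h = a → b ∈ ι.range := by
    intro h hh
    have e : (ι h) ^ 2 + ι h = ι a := by
      rw [← map_pow, ← map_add, hh]
    have hx : (b + ι h) * (b + ι h + 1) = 0 := by
      linear_combination hb + e + (ι a + b * ι h) * h2A
    rcases mul_eq_zero.mp hx with hx0 | hx1
    · refine ⟨-h, ?_⟩
      rw [map_neg]
      linear_combination -hx0
    · refine ⟨-h - 1, ?_⟩
      rw [map_sub, map_neg, map_one]
      linear_combination -hx1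
  constructor
  · intro hbot
    -- find `h` such that `h² + h + a` vanishes in all degrees `≤ 0`
    have key : ∃ h : Kk τ, ∀ n : ℤ, n ≤ 0 → (h ^ 2 + h + a).coeff n = 0 := by
      by_contra hkey
      push_neg at hkey
      have h1 : (1 : Kk τ) ∈ ASdefect τ a := by
        rw [ASdefect, Submodule.mem_iInf]
        intro h
        obtain ⟨n, hn, hne⟩ := hkey h
        have hc0 : h ^ 2 + h + a ≠ 0 := by
          intro h0
          rw [h0] at hne
          simp at hne
        exact ASaux.one_mem_span _ hc0
          (le_trans (HahnSeries.order_le_of_coeff_ne_zero hne) hn)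
      rw [hbot] at h1
      exact one_ne_zero ((Submodule.mem_bot _).mp h1)
    obtain ⟨h, hcoeff⟩ := key
    set c : Kk τ := h ^ 2 + h + a with hc
    by_cases hc0 : c = 0
    · apply caseA h
      linear_combination hc0.symm + (h^2 + h) * h2K
    · obtain ⟨r, hr, hrc⟩ := ASaux.exists_powerSeries c
        (fun n hn => hcoeff n (le_of_lt hn))
      have hr0 : PowerSeries.coeff (R := Fq τ) 0 r = 0 := by
        rw [hrc]
        exact hcoeff 0 le_rfl
      obtain ⟨g, hg⟩ := ASaux.exists_AS_root r hr0
      have hgc : ((g : Ok τ) : Kk τ) ^ 2 + (g : Kk τ) = c := by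
        rw [← hr, ← hg]
        push_cast
        ring
      apply caseA (h + (g : Kk τ))
      linear_combination hgc + hc + (h^2 + h + h * (g : Kk τ)) * h2K
  · rintro ⟨h, rfl⟩
    have hh : h ^ 2 + h = a := by
      apply ι.injective
      rw [map_add, map_pow]
      exact hb
    have hzero : h ^ 2 + h + a = 0 := by
      linear_combination hh + (a + a) * h2K - h2K * a
    rw [eq_bot_iff]
    calc ASdefect τ a ≤ Submodule.span (Ok τ) {h ^ 2 + h + a} := iInf_le _ h
      _ = ⊥ := by rw [hzero, Submodule.span_zero_singleton]
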